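/- For a strictly double positive moment sequence, set l_n := |P_n(0)|² and ω_n := −1/(b_n P_n(0) P_{n+1}(0)). Then the Jacobi coefficients admit the representation a_n = (1/l_n)(1/ω_{n−1} + 1/ω_n) and b_n = 1/(ω_n √(l_n l_{n+1})) for all n ≥ 0, with the convention 1/ω_{−1} := 0; moreover l_n > 0 and ω_n > 0. -/

import Mathlib

open MeasureTheory

noncomputable section

/-- The Hankel determinant `Δ_{0,n} = det (s_{i+j})_{0 ≤ i,j ≤ n}`. -/
def hankel (s : ℕ → ℝ) (n : ℕ) : ℝ :=
  (Matrix.of fun i j : Fin (n + 1) => s (i.1 + j.1)).det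

/-- `Δ_{0,n-1}` with the convention `Δ_{0,-1} = 1`. -/
def hankelPrev (s : ℕ → ℝ) : ℕ → ℝ
  | 0 => 1
  | n + 1 => hankel s n

/-- The shifted Hankel determinant `Δ_{1,n} = det (s_{1+i+j})_{0 ≤ i,j ≤ n−1}`
(with `Δ_{1,0} = 1`). -/
def hankel1 (s : ℕ → ℝ) (n : ℕ) : ℝ :=
  (Matrix.of fun i j : Fin n => s (1 + i.1 + j.1)).det

/-- `ρ` is a solution of the Hamburger moment problem with data `s`. -/
def IsMomentSolution (s : ℕ → ℝ) (ρ : Measure ℝ) : Prop :=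
  ∀ k : ℕ, Integrable (fun x : ℝ => x ^ k) ρ ∧ (∫ x, x ^ k ∂ρ) = s k

/-- The orthonormal polynomial of the first kind `P_n`, via the determinant formula. -/
def Pn (s : ℕ → ℝ) (n : ℕ) (z : ℝ) : ℝ :=
  (Real.sqrt (hankelPrev s n * hankel s n))⁻¹ *
    (Matrix.of fun i j : Fin (n + 1) =>
      if i.1 < n then s (i.1 + j.1) else z ^ j.1).det

/-- The diagonal Jacobi coefficient `a_n = ∫ λ P_n(λ)² dρ(λ)`. -/
def aJ (s : ℕ → ℝ) (ρ : Measure ℝ) (n : ℕ) : ℝ :=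
  ∫ x, x * (Pn s n x) ^ 2 ∂ρ

/-- The off-diagonal Jacobi coefficient `b_n = ∫ λ P_n(λ) P_{n+1}(λ) dρ(λ)`. -/
def bJ (s : ℕ → ℝ) (ρ : Measure ℝ) (n : ℕ) : ℝ :=
  ∫ x, x * Pn s n x * Pn s (n + 1) x ∂ρ

/-- The Krein–Stieltjes string length `l_n = |P_n(0)|²`. -/
def lKS (s : ℕ → ℝ) (n : ℕ) : ℝ := (Pn s n 0) ^ 2

/-- The Krein–Stieltjes string mass `ω_n = −1/(b_n P_n(0) P_{n+1}(0))`. -/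
def omKS (s : ℕ → ℝ) (ρ : Measure ℝ) (n : ℕ) : ℝ :=
  -1 / (bJ s ρ n * Pn s n 0 * Pn s (n + 1) 0)

namespace KSAux

/-- base Hankel matrix -/
def bm (s : ℕ → ℝ) (n : ℕ) : Matrix (Fin (n+1)) (Fin (n+1)) ℝ :=
  Matrix.of fun i j => s (i.1 + j.1)

/-- determinant with last row replaced -/
def dU (s : ℕ → ℝ) (n : ℕ) (v : Fin (n+1) → ℝ) : ℝ :=
  ((bm s n).updateRow (Fin.last n) v).det

lemma dmat_eq (s : ℕ → ℝ) (n : ℕ) (v : Fin (n+1) → ℝ) :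
    (Matrix.of fun i j : Fin (n+1) => if i.1 < n then s (i.1 + j.1) else v j).det
      = dU s n v := by
  unfold dU
  congr 1
  ext i j
  by_cases h : i = Fin.last n
  · subst h
    simp [Matrix.updateRow_apply, bm]
  · have hi : i.1 < n := by
      have := i.2
      have : i.1 ≠ n := fun hh => h (Fin.ext hh)
      omega
    simp [Matrix.updateRow_apply, h, hi, bm]

lemma det_updateRow_finsum {N : ℕ} (M : Matrix (Fin N) (Fin N) ℝ) (j : Fin N) {ι : Type*} [DecidableEq ι]
    (t : Finset ι) (f : ι → Fin N → ℝ) :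
    (M.updateRow j (∑ k ∈ t, f k)).det = ∑ k ∈ t, (M.updateRow j (f k)).det := by
  induction t using Finset.induction_on with
  | empty =>
    rw [Finset.sum_empty, Finset.sum_empty]
    exact Matrix.det_eq_zero_of_row_eq_zero j (by simp)
  | insert _ _ h ih =>
    rw [Finset.sum_insert h, Finset.sum_insert h, Matrix.det_updateRow_add, ih]

/-- coefficients of the determinant polynomial -/
def c (s : ℕ → ℝ) (n j : ℕ) : ℝ :=
  if h : j < n + 1 then dU s n (Pi.single ⟨j, h⟩ 1) else 0

lemma c_top (s : ℕ → ℝ) {n j : ℕ} (h : n < j) : c s n j = 0 := dif_neg (by omega)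

lemma dU_expand (s : ℕ → ℝ) (n : ℕ) (v : Fin (n+1) → ℝ) :
    dU s n v = ∑ j : Fin (n+1), v j * c s n j.1 := by
  have hv : v = ∑ j : Fin (n+1), Pi.single j (v j) := by
    rw [Finset.univ_sum_single]
  conv_lhs => rw [hv]
  unfold dU
  rw [det_updateRow_finsum]
  refine Finset.sum_congr rfl fun j _ => ?_
  have : Pi.single j (v j) = v j • (Pi.single j 1 : Fin (n+1) → ℝ) := by
    rw [← Pi.single_smul, smul_eq_mul, mul_one]
  rw [this, Matrix.det_updateRow_smul]
  unfold c
  rw [dif_pos j.2]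
  simp [dU, smul_eq_mul]

/-- `∫ x^k D_n(x)` as a determinant -/
def Ed (s : ℕ → ℝ) (n k : ℕ) : ℝ := dU s n (fun j => s (k + j.1))

lemma Ed_expand (s : ℕ → ℝ) (n k : ℕ) :
    Ed s n k = ∑ j ∈ Finset.range (n+1), s (k + j) * c s n j := by
  rw [Ed, dU_expand]
  exact Fin.sum_univ_eq_sum_range (fun j => s (k + j) * c s n j) (n+1)

lemma Ed_lt (s : ℕ → ℝ) {n k : ℕ} (h : k < n) : Ed s n k = 0 := by
  unfold Ed dU
  refine Matrix.det_zero_of_row_eq (i := ⟨k, by omega⟩) (j := Fin.last n) ?_ ?_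
  · intro hh
    have := congrArg Fin.val hh
    simp [Fin.last] at this
    omega
  · funext j
    rw [Matrix.updateRow_apply, Matrix.updateRow_apply]
    have h1 : (⟨k, by omega⟩ : Fin (n+1)) ≠ Fin.last n := by
      intro hh
      have := congrArg Fin.val hh
      simp [Fin.last] at this
      omega
    rw [if_neg h1, if_pos rfl]
    simp [bm]

lemma Ed_self (s : ℕ → ℝ) (n : ℕ) : Ed s n n = hankel s n := by
  unfold Ed dU
  have : (fun j : Fin (n+1) => s (n + j.1)) = bm s n (Fin.last n) := by
    funext j; simp [bm, Fin.last]
  rw [this, Matrix.updateRow_eq_self]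
  rfl

lemma hankel_small (s : ℕ → ℝ) (n : ℕ) :
    (Matrix.of fun i j : Fin n => s (i.1 + j.1)).det = hankelPrev s n := by
  cases n with
  | zero => simp [Matrix.det_fin_zero, hankelPrev]
  | succ m => rfl

lemma c_self (s : ℕ → ℝ) (n : ℕ) : c s n n = hankelPrev s n := by
  unfold c
  rw [dif_pos (by omega : n < n + 1)]
  have hl : (⟨n, by omega⟩ : Fin (n+1)) = Fin.last n := rfl
  rw [hl]
  unfold dU
  rw [Matrix.det_succ_row _ (Fin.last n)]
  rw [Finset.sum_eq_single (Fin.last n)]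
  · rw [Matrix.updateRow_apply, if_pos rfl]
    simp only [Pi.single_eq_same]
    have hsub : ((bm s n).updateRow (Fin.last n) (Pi.single (Fin.last n) 1)).submatrix
        (Fin.last n).succAbove (Fin.last n).succAbove
        = Matrix.of fun i j : Fin n => s (i.1 + j.1) := by
      ext i j
      rw [Matrix.submatrix_apply, Fin.succAbove_last,
        Matrix.updateRow_apply, if_neg (Fin.castSucc_lt_last i).ne]
      simp [bm]
    rw [hsub, hankel_small]
    have : ((-1 : ℝ)) ^ ((Fin.last n).1 + (Fin.last n).1) = 1 := by
      have h2 : ((Fin.last n).1 + (Fin.last n).1) = n + n := by simp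
      rw [h2]
      exact (Even.neg_one_pow ⟨n, rfl⟩)
    rw [this]
    ring
  · intro b _ hb
    rw [Matrix.updateRow_apply, if_pos rfl, Pi.single_eq_of_ne hb]
    ring
  · intro h; exact absurd (Finset.mem_univ _) h

lemma c_zero (s : ℕ → ℝ) (n : ℕ) : c s n 0 = (-1)^n * hankel1 s n := by
  unfold c
  rw [dif_pos (by omega : 0 < n + 1)]
  unfold dU
  rw [Matrix.det_succ_row _ (Fin.last n)]
  rw [Finset.sum_eq_single (0 : Fin (n+1))]
  · rw [Matrix.updateRow_apply, if_pos rfl]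
    have h0 : (⟨0, by omega⟩ : Fin (n+1)) = (0 : Fin (n+1)) := rfl
    rw [h0]
    simp only [Pi.single_eq_same]
    have hsub : ((bm s n).updateRow (Fin.last n) (Pi.single 0 1)).submatrix
        (Fin.last n).succAbove (0 : Fin (n+1)).succAbove
        = Matrix.of fun i j : Fin n => s (1 + i.1 + j.1) := by
      ext i j
      rw [Matrix.submatrix_apply, Fin.succAbove_last, Fin.succAbove_zero,
        Matrix.updateRow_apply, if_neg (Fin.castSucc_lt_last i).ne]
      simp only [bm, Matrix.of_apply, Fin.coe_castSucc, Fin.val_succ]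
      congr 1
      omega
    rw [hsub]
    have : hankel1 s n = (Matrix.of fun i j : Fin n => s (1 + i.1 + j.1)).det := rfl
    rw [← this]
    simp [Fin.last]
  · intro b _ hb
    have hb' : b ≠ (⟨0, by omega⟩ : Fin (n+1)) := hb
    rw [Matrix.updateRow_apply, if_pos rfl, Pi.single_eq_of_ne hb']
    ring
  · intro h; exact absurd (Finset.mem_univ _) h

/-- polynomial from coefficients -/
def pl (v : ℕ → ℝ) (M : ℕ) (x : ℝ) : ℝ := ∑ j ∈ Finset.range M, v j * x ^ j

/-- the (unnormalized) determinant polynomial -/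
def Pp (s : ℕ → ℝ) (n : ℕ) (x : ℝ) : ℝ := pl (c s n) (n+1) x

def γ (s : ℕ → ℝ) (n : ℕ) : ℝ := (Real.sqrt (hankelPrev s n * hankel s n))⁻¹

lemma Pp_det (s : ℕ → ℝ) (n : ℕ) (x : ℝ) :
    (Matrix.of fun i j : Fin (n+1) => if i.1 < n then s (i.1 + j.1) else x ^ j.1).det
      = Pp s n x := by
  rw [dmat_eq, dU_expand, Pp, pl]
  rw [Fin.sum_univ_eq_sum_range (fun j => x ^ j * c s n j) (n+1)]
  exact Finset.sum_congr rfl fun j _ => mul_comm _ _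

lemma Pn_eq (s : ℕ → ℝ) (n : ℕ) (x : ℝ) : Pn s n x = γ s n * Pp s n x := by
  rw [Pn, γ, Pp_det]

lemma Pp_zero (s : ℕ → ℝ) (n : ℕ) : Pp s n 0 = c s n 0 := by
  unfold Pp pl
  rw [Finset.sum_eq_single 0]
  · norm_num
  · intro b _ hb
    rw [zero_pow hb, mul_zero]
  · intro h
    exact absurd (Finset.mem_range.mpr (by omega)) h

lemma Pn_zero (s : ℕ → ℝ) (n : ℕ) : Pn s n 0 = γ s n * c s n 0 := by
  rw [Pn_eq, Pp_zero]

/-- the fundamental double sum -/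
def SS (s : ℕ → ℝ) (k m d : ℕ) : ℝ := ∑ j ∈ Finset.range (m+1), c s m j * Ed s k (d + j)

lemma SS_expand (s : ℕ → ℝ) (k m d : ℕ) :
    SS s k m d = ∑ j ∈ Finset.range (m+1), ∑ i ∈ Finset.range (k+1),
      c s m j * (s (d + j + i) * c s k i) := by
  unfold SS
  refine Finset.sum_congr rfl fun j _ => ?_
  rw [Ed_expand, Finset.mul_sum]

lemma SS_symm (s : ℕ → ℝ) (k m d : ℕ) : SS s k m d = SS s m k d := by
  rw [SS_expand, SS_expand, Finset.sum_comm]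
  refine Finset.sum_congr rfl fun i _ => Finset.sum_congr rfl fun j _ => ?_
  have h : d + j + i = d + i + j := by omega
  rw [h]; ring

lemma SS_lt (s : ℕ → ℝ) {k m : ℕ} (h : m < k) : SS s k m 0 = 0 := by
  unfold SS
  refine Finset.sum_eq_zero fun j hj => ?_
  rw [Ed_lt s (by simp at hj; omega), mul_zero]

lemma SS_self (s : ℕ → ℝ) (n : ℕ) : SS s n n 0 = hankelPrev s n * hankel s n := by
  unfold SS
  rw [Finset.sum_eq_single n]
  · rw [show 0 + n = n by omega, Ed_self, c_self]
  · intro b hb hbn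
    rw [Ed_lt s (by simp at hb; omega), mul_zero]
  · intro h
    exact absurd (Finset.mem_range.mpr (by omega)) h

lemma SS_lt1 (s : ℕ → ℝ) {k m : ℕ} (h : m + 1 < k) : SS s k m 1 = 0 := by
  unfold SS
  refine Finset.sum_eq_zero fun j hj => ?_
  rw [Ed_lt s (by simp at hj; omega), mul_zero]

lemma SS_succ1 (s : ℕ → ℝ) (m : ℕ) : SS s (m+1) m 1 = hankelPrev s m * hankel s (m+1) := by
  unfold SS
  rw [Finset.sum_eq_single m]
  · rw [show 1 + m = m + 1 by omega, Ed_self, c_self]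
  · intro b hb hbn
    rw [Ed_lt s (by simp at hb; omega), mul_zero]
  · intro h
    exact absurd (Finset.mem_range.mpr (by omega)) h

lemma pl_mul_pl (d M N : ℕ) (u v : ℕ → ℝ) (x : ℝ) :
    x ^ d * pl u M x * pl v N x
      = ∑ i ∈ Finset.range M, ∑ j ∈ Finset.range N, u i * v j * x ^ (d + i + j) := by
  unfold pl
  rw [mul_assoc, Finset.sum_mul_sum, Finset.mul_sum]
  refine Finset.sum_congr rfl fun i _ => ?_
  rw [Finset.mul_sum]
  refine Finset.sum_congr rfl fun j _ => ?_
  rw [pow_add, pow_add]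
  ring

lemma integral_pp (s : ℕ → ℝ) (ρ : Measure ℝ) (hρ : IsMomentSolution s ρ)
    (d M N : ℕ) (u v : ℕ → ℝ) :
    ∫ x, x ^ d * pl u M x * pl v N x ∂ρ
      = ∑ i ∈ Finset.range M, ∑ j ∈ Finset.range N, u i * v j * s (d + i + j) := by
  rw [show (fun x => x ^ d * pl u M x * pl v N x)
      = fun x => ∑ i ∈ Finset.range M, ∑ j ∈ Finset.range N, u i * v j * x ^ (d + i + j)
    from funext fun x => pl_mul_pl d M N u v x]
  rw [integral_finset_sum _ fun i _ =>
    integrable_finset_sum _ fun j _ => ((hρ _).1.const_mul _)]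
  refine Finset.sum_congr rfl fun i _ => ?_
  rw [integral_finset_sum _ fun j _ => ((hρ _).1.const_mul _)]
  refine Finset.sum_congr rfl fun j _ => ?_
  rw [integral_const_mul, (hρ _).2]

lemma integral_pp_SS (s : ℕ → ℝ) (ρ : Measure ℝ) (hρ : IsMomentSolution s ρ)
    (n m d : ℕ) :
    ∫ x, x ^ d * Pp s n x * Pp s m x ∂ρ = SS s n m d := by
  unfold Pp
  rw [integral_pp s ρ hρ, Finset.sum_comm, SS_expand]
  refine Finset.sum_congr rfl fun j _ => Finset.sum_congr rfl fun i _ => ?_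
  have h : d + i + j = d + j + i := by omega
  rw [h]; ring

lemma aJ_SS (s : ℕ → ℝ) (ρ : Measure ℝ) (hρ : IsMomentSolution s ρ) (n : ℕ) :
    aJ s ρ n = γ s n ^ 2 * SS s n n 1 := by
  unfold aJ
  rw [← integral_pp_SS s ρ hρ n n 1, ← integral_const_mul]
  refine integral_congr_ae (Filter.Eventually.of_forall fun x => ?_)
  simp only [Pn_eq]
  ring

lemma bJ_SS (s : ℕ → ℝ) (ρ : Measure ℝ) (hρ : IsMomentSolution s ρ) (n : ℕ) :
    bJ s ρ n = γ s n * γ s (n+1) * SS s (n+1) n 1 := by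
  unfold bJ
  rw [← integral_pp_SS s ρ hρ (n+1) n 1, ← integral_const_mul]
  refine integral_congr_ae (Filter.Eventually.of_forall fun x => ?_)
  simp only [Pn_eq]
  ring

lemma hankelPrev_pos (s : ℕ → ℝ) (h0 : ∀ n, 0 < hankel s n) (n : ℕ) :
    0 < hankelPrev s n := by
  cases n with
  | zero => exact one_pos
  | succ m => exact h0 m

lemma γ_pos (s : ℕ → ℝ) (h0 : ∀ n, 0 < hankel s n) (n : ℕ) : 0 < γ s n := by
  unfold γ
  exact inv_pos.mpr (Real.sqrt_pos.mpr (mul_pos (hankelPrev_pos s h0 n) (h0 n)))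

lemma γ_sq (s : ℕ → ℝ) (h0 : ∀ n, 0 < hankel s n) (n : ℕ) :
    γ s n ^ 2 * (hankelPrev s n * hankel s n) = 1 := by
  unfold γ
  rw [inv_pow, Real.sq_sqrt (mul_pos (hankelPrev_pos s h0 n) (h0 n)).le]
  exact inv_mul_cancel₀ (mul_pos (hankelPrev_pos s h0 n) (h0 n)).ne'

def bp (s : ℕ → ℝ) (ρ : Measure ℝ) (n : ℕ) : ℝ :=
  match n with
  | 0 => 0
  | m + 1 => bJ s ρ m

def rv (s : ℕ → ℝ) (ρ : Measure ℝ) (n j : ℕ) : ℝ :=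
  bp s ρ n * (γ s (n-1) * c s (n-1) j) + aJ s ρ n * (γ s n * c s n j)
    + bJ s ρ n * (γ s (n+1) * c s (n+1) j)
    - (match j with | 0 => 0 | i + 1 => γ s n * c s n i)

def ν (s : ℕ → ℝ) (ρ : Measure ℝ) (n k : ℕ) : ℝ :=
  ∑ j ∈ Finset.range (n+2), rv s ρ n j * s (k + j)

lemma sum_c_mul (s : ℕ → ℝ) {m M : ℕ} (hM : m + 1 ≤ M) (k : ℕ) :
    ∑ j ∈ Finset.range M, c s m j * s (k + j) = Ed s m k := by
  rw [Ed_expand]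
  rw [← Finset.sum_subset (Finset.range_subset_range.mpr hM)
    (fun j _ hj2 => by
      rw [c_top s (by simp at hj2 ⊢; omega), zero_mul])]
  exact Finset.sum_congr rfl fun j _ => mul_comm _ _

lemma sum_shift_c (s : ℕ → ℝ) (n k : ℕ) :
    ∑ j ∈ Finset.range (n+2),
      (match j with | 0 => (0:ℝ) | i + 1 => γ s n * c s n i) * s (k + j)
      = γ s n * Ed s n (k+1) := by
  rw [Finset.sum_range_succ']
  have h0 : (match 0 with | 0 => (0:ℝ) | i + 1 => γ s n * c s n i) * s (k + 0) = 0 :=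
    zero_mul _
  rw [h0, add_zero]
  have h1 : ∀ i, (match i + 1 with | 0 => (0:ℝ) | i + 1 => γ s n * c s n i) * s (k + (i+1))
      = γ s n * (c s n i * s ((k+1) + i)) := by
    intro i
    show γ s n * c s n i * s (k + (i+1)) = _
    rw [show k + (i+1) = (k+1) + i by omega]
    ring
  rw [Finset.sum_congr rfl fun i _ => h1 i, ← Finset.mul_sum,
    sum_c_mul s (le_refl (n+1)) (k+1)]

lemma nu_eq (s : ℕ → ℝ) (ρ : Measure ℝ) (n k : ℕ) :
    ν s ρ n k = bp s ρ n * γ s (n-1) * Ed s (n-1) k + aJ s ρ n * γ s n * Ed s n k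
      + bJ s ρ n * γ s (n+1) * Ed s (n+1) k - γ s n * Ed s n (k+1) := by
  unfold ν
  have expand : ∀ j, rv s ρ n j * s (k + j)
      = bp s ρ n * γ s (n-1) * (c s (n-1) j * s (k + j))
        + aJ s ρ n * γ s n * (c s n j * s (k + j))
        + bJ s ρ n * γ s (n+1) * (c s (n+1) j * s (k + j))
        - ((match j with | 0 => (0:ℝ) | i + 1 => γ s n * c s n i) * s (k + j)) := by
    intro j
    unfold rv
    ring
  rw [Finset.sum_congr rfl fun j _ => expand j]
  rw [Finset.sum_sub_distrib, Finset.sum_add_distrib, Finset.sum_add_distrib,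
    ← Finset.mul_sum, ← Finset.mul_sum, ← Finset.mul_sum]
  rw [sum_c_mul s (by omega) k, sum_c_mul s (by omega) k, sum_c_mul s (by omega) k,
    sum_shift_c s n k]

lemma testA (s : ℕ → ℝ) (ρ : Measure ℝ) (hρ : IsMomentSolution s ρ)
    (h0 : ∀ n, 0 < hankel s n) (n k : ℕ) (hk : k ≤ n + 1) :
    ∑ i ∈ Finset.range (k+1), c s k i * ν s ρ n i = 0 := by
  have key : ∑ i ∈ Finset.range (k+1), c s k i * ν s ρ n i
      = bp s ρ n * γ s (n-1) * SS s (n-1) k 0 + aJ s ρ n * γ s n * SS s n k 0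
        + bJ s ρ n * γ s (n+1) * SS s (n+1) k 0 - γ s n * SS s n k 1 := by
    have expand : ∀ i, c s k i * ν s ρ n i
        = bp s ρ n * γ s (n-1) * (c s k i * Ed s (n-1) (0 + i))
          + aJ s ρ n * γ s n * (c s k i * Ed s n (0 + i))
          + bJ s ρ n * γ s (n+1) * (c s k i * Ed s (n+1) (0 + i))
          - γ s n * (c s k i * Ed s n (1 + i)) := by
      intro i
      rw [nu_eq, show (0:ℕ) + i = i by omega, show 1 + i = i + 1 by omega]
      ring
    rw [Finset.sum_congr rfl fun i _ => expand i]
    rw [Finset.sum_sub_distrib, Finset.sum_add_distrib, Finset.sum_add_distrib,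
      ← Finset.mul_sum, ← Finset.mul_sum, ← Finset.mul_sum, ← Finset.mul_sum]
    rfl
  rw [key]
  have hcases : k + 1 < n ∨ k + 1 = n ∨ k = n ∨ k = n + 1 := by omega
  rcases hcases with h | h | h | h
  · rw [SS_lt s (by omega), SS_lt s (by omega), SS_lt s (by omega), SS_lt1 s (by omega)]
    ring
  · subst h
    rw [show k + 1 - 1 = k by omega, SS_self, SS_lt s (by omega), SS_lt s (by omega),
      SS_succ1, show bp s ρ (k+1) = bJ s ρ k from rfl, bJ_SS s ρ hρ k, SS_succ1]
    linear_combination (γ s (k+1) * (hankelPrev s k * hankel s (k+1))) * γ_sq s h0 k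
  · subst h
    rw [SS_self, SS_lt (s := s) (k := k+1) (m := k) (by omega), aJ_SS s ρ hρ k]
    cases k with
    | zero =>
      rw [show bp s ρ 0 = 0 from rfl]
      linear_combination (γ s 0 * SS s 0 0 1) * γ_sq s h0 0
    | succ m =>
      simp only [Nat.add_sub_cancel]
      rw [SS_symm s m (m+1) 0, SS_lt (s := s) (k := m+1) (m := m) (by omega)]
      linear_combination (γ s (m+1) * SS s (m+1) (m+1) 1) * γ_sq s h0 (m+1)
  · subst h
    rw [SS_symm s (n-1) (n+1) 0, SS_lt s (by omega), SS_symm s n (n+1) 0,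
      SS_lt s (by omega), SS_self, SS_symm s n (n+1) 1, SS_succ1,
      bJ_SS s ρ hρ n, SS_succ1]
    linear_combination (γ s n * (hankelPrev s n * hankel s (n+1))) * γ_sq s h0 (n+1)

lemma nu_zero (s : ℕ → ℝ) (ρ : Measure ℝ) (hρ : IsMomentSolution s ρ)
    (h0 : ∀ n, 0 < hankel s n) (n : ℕ) :
    ∀ k, k ≤ n + 1 → ν s ρ n k = 0 := by
  intro k
  induction k using Nat.strong_induction_on with
  | _ k ih =>
    intro hk
    have h := testA s ρ hρ h0 n k hk
    rw [Finset.sum_range_succ] at h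
    have hz : ∑ i ∈ Finset.range k, c s k i * ν s ρ n i = 0 :=
      Finset.sum_eq_zero fun i hi => by
        rw [ih i (Finset.mem_range.mp hi) (by have := Finset.mem_range.mp hi; omega), mul_zero]
    rw [hz, zero_add, c_self] at h
    exact ((mul_eq_zero.mp h).resolve_left (hankelPrev_pos s h0 k).ne')

lemma rv_zero (s : ℕ → ℝ) (ρ : Measure ℝ) (hρ : IsMomentSolution s ρ)
    (h0 : ∀ n, 0 < hankel s n) (n : ℕ) : rv s ρ n 0 = 0 := by
  have hv : (Matrix.of fun k j : Fin (n+2) => s (k.1 + j.1)).mulVec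
      (fun j => rv s ρ n j.1) = 0 := by
    funext k
    show ∑ j : Fin (n+2), s (k.1 + j.1) * rv s ρ n j.1 = 0
    have hnu := nu_zero s ρ hρ h0 n k.1 (by omega)
    rw [← hnu]
    rw [Fin.sum_univ_eq_sum_range (fun j => s (k.1 + j) * rv s ρ n j) (n+2)]
    exact Finset.sum_congr rfl fun j _ => mul_comm _ _
  have hdet : (Matrix.of fun k j : Fin (n+2) => s (k.1 + j.1)).det ≠ 0 := by
    have : (Matrix.of fun k j : Fin (n+2) => s (k.1 + j.1)).det = hankel s (n+1) := rfl
    rw [this]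
    exact (h0 (n+1)).ne'
  have := Matrix.eq_zero_of_mulVec_eq_zero hdet hv
  exact congrFun this (⟨0, by omega⟩ : Fin (n+2))

lemma recurrence_zero (s : ℕ → ℝ) (ρ : Measure ℝ) (hρ : IsMomentSolution s ρ)
    (h0 : ∀ n, 0 < hankel s n) (n : ℕ) :
    bp s ρ n * Pn s (n-1) 0 + aJ s ρ n * Pn s n 0 + bJ s ρ n * Pn s (n+1) 0 = 0 := by
  have h := rv_zero s ρ hρ h0 n
  unfold rv at h
  rw [Pn_zero, Pn_zero, Pn_zero]
  linear_combination h

lemma Pn_zero_val (s : ℕ → ℝ) (n : ℕ) :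
    Pn s n 0 = γ s n * ((-1)^n * hankel1 s n) := by
  rw [Pn_zero, c_zero]

lemma Pn_prod_neg (s : ℕ → ℝ) (h0 : ∀ n, 0 < hankel s n) (h1 : ∀ n, 0 < hankel1 s n)
    (n : ℕ) : Pn s n 0 * Pn s (n+1) 0 < 0 := by
  have e : Pn s n 0 * Pn s (n+1) 0
      = -(γ s n * γ s (n+1) * hankel1 s n * hankel1 s (n+1)) := by
    rw [Pn_zero_val, Pn_zero_val]
    have hodd : ((-1:ℝ))^n * (-1)^(n+1) = -1 := by
      rw [← pow_add]
      exact Odd.neg_one_pow ⟨n, by omega⟩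
    linear_combination (γ s n * γ s (n+1) * hankel1 s n * hankel1 s (n+1)) * hodd
  rw [e]
  have := mul_pos (mul_pos (mul_pos (γ_pos s h0 n) (γ_pos s h0 (n+1))) (h1 n)) (h1 (n+1))
  linarith

lemma Pn_zero_ne (s : ℕ → ℝ) (h0 : ∀ n, 0 < hankel s n) (h1 : ∀ n, 0 < hankel1 s n)
    (n : ℕ) : Pn s n 0 ≠ 0 := fun h => by
  have hp := Pn_prod_neg s h0 h1 n
  rw [h, zero_mul] at hp
  exact lt_irrefl 0 hp

lemma bJ_pos (s : ℕ → ℝ) (ρ : Measure ℝ) (hρ : IsMomentSolution s ρ)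
    (h0 : ∀ n, 0 < hankel s n) (n : ℕ) : 0 < bJ s ρ n := by
  rw [bJ_SS s ρ hρ n, SS_succ1]
  exact mul_pos (mul_pos (γ_pos s h0 n) (γ_pos s h0 (n+1)))
    (mul_pos (hankelPrev_pos s h0 n) (h0 (n+1)))

end KSAux

/-- For a strictly double positive moment sequence the Jacobi coefficients admit the
Krein–Stieltjes representation `a_n = (1/l_n)(1/ω_{n−1} + 1/ω_n)`,
`b_n = 1/(ω_n √(l_n l_{n+1}))` (with `1/ω_{−1} := 0`); moreover `l_n > 0`, `ω_n > 0`. -/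
theorem jacobi_krein_stieltjes_representation (s : ℕ → ℝ) (ρ : Measure ℝ)
    [IsProbabilityMeasure ρ] (hρ : IsMomentSolution s ρ)
    (h0 : ∀ n, 0 < hankel s n) (h1 : ∀ n, 0 < hankel1 s n) :
    ∀ n : ℕ, 0 < lKS s n ∧ 0 < omKS s ρ n ∧
      aJ s ρ n = (1 / lKS s n) *
        ((match n with
          | 0 => (0 : ℝ)
          | m + 1 => 1 / omKS s ρ m) + 1 / omKS s ρ n) ∧
      bJ s ρ n = 1 / (omKS s ρ n * Real.sqrt (lKS s n * lKS s (n + 1))) := by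
  intro n
  have hb := KSAux.bJ_pos s ρ hρ h0 n
  have hprod := KSAux.Pn_prod_neg s h0 h1 n
  have hPn := KSAux.Pn_zero_ne s h0 h1 n
  have hPn1 := KSAux.Pn_zero_ne s h0 h1 (n+1)
  have hD : bJ s ρ n * Pn s n 0 * Pn s (n+1) 0 < 0 := by
    rw [mul_assoc]
    exact mul_neg_of_pos_of_neg hb hprod
  have hω : 0 < omKS s ρ n := by
    rw [omKS]
    exact div_pos_of_neg_of_neg (by norm_num) hD
  have hinv : ∀ m, 1 / omKS s ρ m = -(bJ s ρ m * Pn s m 0 * Pn s (m+1) 0) := by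
    intro m
    rw [omKS, one_div_div]
    ring
  refine ⟨pow_two_pos_of_ne_zero hPn, hω, ?_, ?_⟩
  · have hrec := KSAux.recurrence_zero s ρ hρ h0 n
    cases n with
    | zero =>
      have hrec0 : aJ s ρ 0 * Pn s 0 0 + bJ s ρ 0 * Pn s 1 0 = 0 := by
        have hb0 : KSAux.bp s ρ 0 = 0 := rfl
        rw [hb0, zero_mul, zero_add] at hrec
        exact hrec
      show aJ s ρ 0 = 1 / lKS s 0 * (0 + 1 / omKS s ρ 0)
      rw [hinv 0, lKS]
      field_simp
      linear_combination (Pn s 0 0) * hrec0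
    | succ m =>
      have hrec' : bJ s ρ m * Pn s m 0 + aJ s ρ (m+1) * Pn s (m+1) 0
          + bJ s ρ (m+1) * Pn s (m+2) 0 = 0 := by
        have hbm : KSAux.bp s ρ (m+1) = bJ s ρ m := rfl
        rw [hbm, Nat.add_sub_cancel] at hrec
        convert hrec using 3
      show aJ s ρ (m+1) = 1 / lKS s (m+1) * (1 / omKS s ρ m + 1 / omKS s ρ (m+1))
      rw [hinv m, hinv (m+1), lKS]
      field_simp
      linear_combination hrec'
  · have hsq : Real.sqrt (lKS s n * lKS s (n+1)) = -(Pn s n 0 * Pn s (n+1) 0) := by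
      rw [lKS, lKS, show Pn s n 0^2 * Pn s (n+1) 0^2 = (Pn s n 0 * Pn s (n+1) 0)^2 by ring,
        Real.sqrt_sq_eq_abs, abs_of_neg hprod]
    have h2 : omKS s ρ n * Real.sqrt (lKS s n * lKS s (n+1)) = 1 / bJ s ρ n := by
      rw [hsq, omKS]
      field_simp
    rw [h2, one_div_one_div]
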